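/- Suppose p satisfies p01·p10 < p11·p00 and let (G_a, G_b) ~ ER(n, p). Then for every ñ and every permutation π ∈ S_{n,ñ}, P[δ(l(π); G_a, G_b) ≤ 0] ≤ exp(−(1/2)·ñ·(n−2)·(√(p11·p00) − √(p01·p10))²). -/

import Mathlib

open Finset

/-- Unordered pairs of distinct vertices of `[n]`. -/
abbrev VPairs (n : ℕ) := {e : Sym2 (Fin n) // ¬ e.IsDiag}

/-- A graph on `[n]`, identified with its edge-indicator function. -/
abbrev VGraph (n : ℕ) := VPairs n → Bool

/-- The permutation of vertex pairs induced by a permutation of vertices. -/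
def pairPerm {n : ℕ} (π : Equiv.Perm (Fin n)) : Equiv.Perm (VPairs n) where
  toFun e := ⟨e.val.map π, fun h => e.prop ((Sym2.isDiag_map π.injective).mp h)⟩
  invFun e := ⟨e.val.map π.symm, fun h => e.prop ((Sym2.isDiag_map π.symm.injective).mp h)⟩
  left_inv e := by
    ext1
    simp [Sym2.map_map]
  right_inv e := by
    ext1
    simp [Sym2.map_map]

/-- Hamming distance between two labelings. -/
def hamming {S : Type*} [Fintype S] [DecidableEq S] (f g : S → Bool) : ℕ :=
  (Finset.univ.filter fun e => f e ≠ g e).card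

/-- `δ(τ; f, g) = (Δ(f∘τ, g) − Δ(f, g))/2`, as a rational number. -/
def deltaQ {S : Type*} [Fintype S] [DecidableEq S] (τ : Equiv.Perm S) (f g : S → Bool) : ℚ :=
  (((hamming (f ∘ τ) g : ℚ)) - (hamming f g : ℚ)) / 2

/-- The entry `(i,j)` of the type `μ(f,g)`. -/
def typeCount {S : Type*} [Fintype S] [DecidableEq S] (f g : S → Bool) (i j : Bool) : ℕ :=
  (Finset.univ.filter fun e => f e = i ∧ g e = j).card

/-- The joint edge distribution determined by a probability vector. -/
def pv (p11 p10 p01 p00 : ℝ) : Bool → Bool → ℝ :=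
  fun a b => if a then (if b then p11 else p10) else (if b then p01 else p00)

open Classical in
/-- The probability of an event under the correlated Erdős–Rényi model `ER(n,p)`. -/
noncomputable def ERprob (n : ℕ) (p : Bool → Bool → ℝ)
    (E : VGraph n × VGraph n → Prop) : ℝ :=
  ∑ gab : VGraph n × VGraph n,
    (if E gab then (1 : ℝ) else 0) * ∏ e : VPairs n, p (gab.1 e) (gab.2 e)

open Classical in
/-- The probability of an event under the joint distribution of a uniformly random
permutation `Π` of `[n]` together with `(G_a, G_b) ~ ER(n,p)` independent of it. -/
noncomputable def ERPermProb (n : ℕ) (p : Bool → Bool → ℝ)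
    (E : Equiv.Perm (Fin n) → VGraph n × VGraph n → Prop) : ℝ :=
  (∑ π : Equiv.Perm (Fin n), ∑ gab : VGraph n × VGraph n,
    (if E π gab then (1 : ℝ) else 0) * ∏ e : VPairs n, p (gab.1 e) (gab.2 e))
    / (Nat.factorial n)

/-- The anonymized graph `G_c`, determined by `G_c(l(Π)(e)) = G_a(e)`. -/
def anonymize {n : ℕ} (π : Equiv.Perm (Fin n)) (ga : VGraph n) : VGraph n :=
  fun e => ga ((pairPerm π).symm e)

/-- `S_{n,nt}`: the permutations of `[n]` with exactly `nt` non-fixed points. -/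
def Snn (n nt : ℕ) : Finset (Equiv.Perm (Fin n)) :=
  Finset.univ.filter fun π => (Finset.univ.filter fun x => π x ≠ x).card = nt

open Classical in
/-- The generating function `A_{S,τ}(w,z)`; here `z^δ` is expressed as `√z^(2δ)`. -/
noncomputable def AgF {S : Type*} [Fintype S] (τ : Equiv.Perm S)
    (w : Bool → Bool → ℝ) (z : ℝ) : ℝ :=
  ∑ g : S → Bool, ∑ h : S → Bool,
    (Real.sqrt z) ^ ((hamming (g ∘ τ) h : ℤ) - (hamming g h : ℤ)) *
      ∏ i : Bool, ∏ j : Bool, w i j ^ typeCount g h i j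

/-- `a_ℓ(w,z)`: the generating function of a single cycle of length `ℓ`. -/
noncomputable def aGF (ℓ : ℕ) (w : Bool → Bool → ℝ) (z : ℝ) : ℝ :=
  AgF (finRotate ℓ) w z

open Classical in
/-- The number of cycles of length `ℓ` in the cycle decomposition of `τ`
(the number of points whose `τ`-orbit has size `ℓ`, divided by `ℓ`). -/
noncomputable def cycleCount {S : Type*} [Fintype S] (τ : Equiv.Perm S) (ℓ : ℕ) : ℕ :=
  (Finset.univ.filter fun x : S =>
    (Finset.univ.filter fun y : S => τ.SameCycle x y).card = ℓ).card / ℓ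

open Classical in
/-- The probability of an event under an Erdős–Rényi graph `G(n,p)`. -/
noncomputable def ERgraphProb (n : ℕ) (p : ℝ) (E : VGraph n → Prop) : ℝ :=
  ∑ g : VGraph n,
    (if E g then (1 : ℝ) else 0) * ∏ e : VPairs n, (if g e then p else 1 - p)

open Classical in
/-- The number of automorphisms of a graph. -/
noncomputable def autCard {n : ℕ} (g : VGraph n) : ℕ :=
  (Finset.univ.filter fun π : Equiv.Perm (Fin n) =>
    ∀ e : VPairs n, g (pairPerm π e) = g e).card

section AuxLemmas

theorem Equiv.Perm.apply_inv_self {S : Type*} (τ : Equiv.Perm S) (x : S) : τ (τ⁻¹ x) = x :=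
  Equiv.apply_symm_apply τ x

theorem Equiv.Perm.inv_apply_self {S : Type*} (τ : Equiv.Perm S) (x : S) : τ⁻¹ (τ x) = x :=
  Equiv.symm_apply_apply τ x

lemma sum_fun_prod {ι κ : Type*} [Fintype ι] [DecidableEq ι] [Fintype κ]
    (F : ι → κ → ℝ) :
    ∑ f : ι → κ, ∏ x, F x (f x) = ∏ x, ∑ b, F x b :=
  (Fintype.prod_sum F).symm

lemma inv_constant {S : Type*} (τ : Equiv.Perm S) (ε : S → Bool)
    (hε : ∀ x, ε (τ x) = ε x) {x y : S} (h : τ.SameCycle x y) : ε x = ε y := by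
  have key : ∀ (i : ℤ) (x : S), ε ((τ ^ i) x) = ε x := by
    intro i
    induction i using Int.induction_on with
    | zero => intro x; simp
    | succ k ih =>
        intro x
        have h1 : (τ ^ ((k : ℤ) + 1)) x = (τ ^ (k : ℤ)) (τ x) := by
          rw [zpow_add, zpow_one, Equiv.Perm.mul_apply]
        rw [h1, ih, hε]
    | pred k ih =>
        intro x
        have hinv : ∀ y, ε (τ⁻¹ y) = ε y := fun y => by
          rw [← hε (τ⁻¹ y), Equiv.Perm.apply_inv_self]
        have h1 : (τ ^ (-(k : ℤ) - 1)) x = (τ ^ (-(k : ℤ))) (τ⁻¹ x) := by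
          rw [sub_eq_add_neg, zpow_add, zpow_neg_one, Equiv.Perm.mul_apply]
        rw [h1, ih, hinv]
  obtain ⟨i, hi⟩ := h
  rw [← hi, key]

lemma key_sum_eq {S : Type*} [Fintype S] [DecidableEq S] (τ : Equiv.Perm S)
    (l : Bool → ℝ) (u w : Bool → Bool → ℝ)
    (horth : ∀ j k, ∑ a, w j a * u k a = if j = k then (1:ℝ) else 0)
    (M : Bool → Bool → ℝ) (hM : ∀ a b, M a b = ∑ j, l j * u j a * w j b) :
    ∑ f : S → Bool, ∏ x, M (f x) (f (τ x))
      = ∑ ε : S → Bool, (if ∀ x, ε (τ x) = ε x then ∏ x, l (ε x) else 0) := by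
  classical
  have h1 : ∀ f : S → Bool, ∏ x, M (f x) (f (τ x))
      = ∑ ε : S → Bool, ∏ x, (l (ε x) * u (ε x) (f x) * w (ε x) (f (τ x))) := by
    intro f
    calc ∏ x, M (f x) (f (τ x)) = ∏ x, ∑ j, l j * u j (f x) * w j (f (τ x)) :=
          Finset.prod_congr rfl fun x _ => hM _ _
      _ = _ := Fintype.prod_sum _
  rw [Finset.sum_congr rfl fun f _ => h1 f, Finset.sum_comm]
  apply Finset.sum_congr rfl
  intro ε _
  have h2 : ∀ f : S → Bool, ∏ x, (l (ε x) * u (ε x) (f x) * w (ε x) (f (τ x)))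
      = (∏ x, l (ε x)) * ∏ x, (u (ε x) (f x) * w (ε (τ⁻¹ x)) (f x)) := by
    intro f
    rw [Finset.prod_mul_distrib, Finset.prod_mul_distrib]
    have h3 : ∏ x, w (ε x) (f (τ x)) = ∏ x, w (ε (τ⁻¹ x)) (f x) := by
      have := Equiv.prod_comp τ⁻¹ (fun y => w (ε y) (f (τ y)))
      simp only [Equiv.Perm.apply_inv_self] at this
      exact this.symm
    rw [h3, mul_assoc, ← Finset.prod_mul_distrib]
  calc ∑ f : S → Bool, ∏ x, (l (ε x) * u (ε x) (f x) * w (ε x) (f (τ x)))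
      = (∏ x, l (ε x)) * ∑ f : S → Bool, ∏ x, (u (ε x) (f x) * w (ε (τ⁻¹ x)) (f x)) := by
        rw [Finset.mul_sum]; exact Finset.sum_congr rfl fun f _ => h2 f
    _ = (∏ x, l (ε x)) * ∏ x, ∑ a, (u (ε x) a * w (ε (τ⁻¹ x)) a) := by
        rw [sum_fun_prod (F := fun x a => u (ε x) a * w (ε (τ⁻¹ x)) a)]
    _ = (∏ x, l (ε x)) * ∏ x, (if ε (τ⁻¹ x) = ε x then (1:ℝ) else 0) := by
        congr 1
        refine Finset.prod_congr rfl fun x _ => ?_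
        rw [show (∑ a, u (ε x) a * w (ε (τ⁻¹ x)) a) = ∑ a, w (ε (τ⁻¹ x)) a * u (ε x) a from
          Finset.sum_congr rfl fun a _ => mul_comm _ _, horth]
    _ = (if ∀ x, ε (τ x) = ε x then ∏ x, l (ε x) else 0) := by
        rw [Fintype.prod_boole]
        have hcond : (∀ x, ε (τ⁻¹ x) = ε x) ↔ (∀ x, ε (τ x) = ε x) := by
          constructor
          · intro h x; have := h (τ x); rwa [Equiv.Perm.inv_apply_self, eq_comm] at this
          · intro h x; have := h (τ⁻¹ x); rwa [Equiv.Perm.apply_inv_self, eq_comm] at this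
        rw [if_congr hcond rfl rfl]
        split_ifs <;> simp

lemma eigen_exists (α β γ δ : ℝ) (hβγ : 0 < β * γ) (hsum1 : α + δ = 1)
    (hdet : 0 ≤ α * δ - β * γ) :
    ∃ (l : Bool → ℝ) (u w : Bool → Bool → ℝ),
      (∀ j k, ∑ a, w j a * u k a = if j = k then (1:ℝ) else 0) ∧
      (∀ a b : Bool, (if a then (if b then α else β) else (if b then γ else δ))
          = ∑ j, l j * u j a * w j b) ∧
      (∀ j, 0 ≤ l j) ∧ (l true + l false = 1) ∧
      (l true ^ 2 + l false ^ 2 = 1 - 2 * (α * δ - β * γ)) := by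
  obtain ⟨lt, lf, hsum', hmul, hlt0, hlf0, hne⟩ :
      ∃ lt lf : ℝ, lt + lf = 1 ∧ lt * lf = α * δ - β * γ ∧ 0 < lt ∧ 0 ≤ lf ∧ lt ≠ lf := by
    have hd4 : 0 < 1 - 4 * (α * δ - β * γ) := by nlinarith [sq_nonneg (α - δ)]
    have hs0 : 0 < Real.sqrt (1 - 4 * (α * δ - β * γ)) := Real.sqrt_pos.mpr hd4
    have hs2 : Real.sqrt (1 - 4 * (α * δ - β * γ)) ^ 2 = 1 - 4 * (α * δ - β * γ) :=
      Real.sq_sqrt hd4.le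
    refine ⟨(1 + Real.sqrt (1 - 4 * (α * δ - β * γ))) / 2,
      (1 - Real.sqrt (1 - 4 * (α * δ - β * γ))) / 2, by ring,
      by linear_combination (-1/4 : ℝ) * hs2, by nlinarith, by nlinarith, by intro h; nlinarith⟩
  have hprod : (lt - α) * (lf - α) = -(β * γ) := by
    linear_combination hmul - α * hsum' + α * hsum1
  have hct : β * γ + (lt - α) ^ 2 = (lt - α) * (lt - lf) := by linear_combination hprod
  have hcf : β * γ + (lf - α) ^ 2 = (lf - α) * (lf - lt) := by linear_combination hprod
  have hctne : β * γ + (lt - α) ^ 2 ≠ 0 := by positivity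
  have hcfne : β * γ + (lf - α) ^ 2 ≠ 0 := by positivity
  have hlta : lt - α ≠ 0 := by intro h; rw [h, zero_mul] at hprod; nlinarith
  have hlfa : lf - α ≠ 0 := by intro h; rw [h, mul_zero] at hprod; nlinarith
  have hsne : lt - lf ≠ 0 := sub_ne_zero.mpr hne
  have hfl : lf - lt ≠ 0 := sub_ne_zero.mpr (Ne.symm hne)
  refine ⟨fun j => if j then lt else lf,
    fun j a => if a then β else ((if j then lt else lf) - α),
    fun j a => (if a then γ else ((if j then lt else lf) - α)) /
      (β * γ + ((if j then lt else lf) - α) ^ 2), ?_, ?_, ?_, by simp [hsum'], ?_⟩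
  · intro j k
    rw [Fintype.sum_bool]
    cases j <;> cases k <;> simp only [Bool.false_eq_true, Bool.true_eq_false, if_true, if_false,
      reduceIte]
    · rw [div_mul_eq_mul_div, div_mul_eq_mul_div, ← add_div, div_eq_one_iff_eq hcfne]; ring
    · rw [div_mul_eq_mul_div, div_mul_eq_mul_div, ← add_div, div_eq_iff hcfne]
      linear_combination hprod
    · rw [div_mul_eq_mul_div, div_mul_eq_mul_div, ← add_div, div_eq_iff hctne]
      linear_combination hprod
    · rw [div_mul_eq_mul_div, div_mul_eq_mul_div, ← add_div, div_eq_one_iff_eq hctne]; ring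
  · intro a b
    rw [Fintype.sum_bool]
    have hA : (lt - α) * (lt - lf) ≠ 0 := mul_ne_zero hlta hsne
    have hB : (lf - α) * (lf - lt) ≠ 0 := mul_ne_zero hlfa hfl
    cases a <;> cases b <;> simp only [Bool.false_eq_true, Bool.true_eq_false, if_true, if_false,
      reduceIte] <;>
      rw [hct, hcf] <;> simp only [mul_div_assoc'] <;>
      rw [div_add_div _ _ hA hB, eq_div_iff (mul_ne_zero hA hB)]
    · linear_combination (-(lt-α)*(lf-α)*(lt-lf)^2) * hsum1 + ((lt-α)*(lf-α)*(lt-lf)^2) * hsum'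
    · ring
    · ring
    · linear_combination (-α * (lt-lf)^2) * hprod
  · intro j; cases j <;> simp [hlf0, hlt0.le]
  · simp only [if_true, if_false, Bool.false_eq_true, reduceIte]
    linear_combination (lt + lf + 1) * hsum' - 2 * hmul

lemma invariant_sum_bound {S : Type*} [Fintype S] [DecidableEq S] (τ : Equiv.Perm S)
    (l : Bool → ℝ) (hl : ∀ j, 0 ≤ l j) (hsum : l true + l false = 1) :
    ∑ ε : S → Bool, (if ∀ x, ε (τ x) = ε x then ∏ x, l (ε x) else 0)
      ≤ Real.sqrt (l true ^ 2 + l false ^ 2) ^ (univ.filter fun x => τ x ≠ x).card := by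
  classical
  set ρ := Real.sqrt (l true ^ 2 + l false ^ 2) with hρ
  have hρ0 : 0 ≤ ρ := Real.sqrt_nonneg _
  have hρsq : ρ ^ 2 = l true ^ 2 + l false ^ 2 := Real.sq_sqrt (by positivity)
  have hlρ : ∀ j, l j ≤ ρ := by
    intro j
    rw [← Real.sqrt_sq (hl j)]
    apply Real.sqrt_le_sqrt
    cases j <;> nlinarith [sq_nonneg (l true), sq_nonneg (l false)]
  letI sc : Setoid S := ⟨τ.SameCycle,
    ⟨fun x => Equiv.Perm.SameCycle.refl τ x, fun h => h.symm, fun h h' => h.trans h'⟩⟩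
  letI : DecidableRel ((· ≈ ·) : S → S → Prop) := fun _ _ => Classical.dec _
  letI : DecidableEq (Quotient sc) := Classical.decEq _
  let κ : S → Quotient sc := fun x => ⟦x⟧
  have hκτ : ∀ x, κ (τ x) = κ x := fun x =>
    Quotient.sound (⟨-1, by simp⟩ : (τ x) ≈ x)
  have hκout : ∀ q : Quotient sc, κ q.out = q := fun q => Quotient.out_eq q
  have hsame : ∀ {x y : S}, κ x = κ y → τ.SameCycle x y := fun h => Quotient.exact h
  -- counts
  set m : Quotient sc → ℕ := fun q => (univ.filter fun x => κ x = q).card with hm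
  set nf : Quotient sc → ℕ := fun q => (univ.filter fun x => κ x = q ∧ τ x ≠ x).card with hnf
  have step1 : ∑ ε : S → Bool, (if ∀ x, ε (τ x) = ε x then ∏ x, l (ε x) else 0)
      = ∑ h : Quotient sc → Bool, ∏ x, l (h (κ x)) := by
    rw [← Finset.sum_filter]
    refine Finset.sum_nbij' (i := fun ε q => ε q.out) (j := fun h x => h (κ x))
      ?_ ?_ ?_ ?_ ?_
    · intro ε _; exact mem_univ _
    · intro h _
      simp only [mem_filter, mem_univ, true_and]
      intro x; rw [hκτ]
    · intro ε hε
      funext x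
      simp only
      exact inv_constant τ ε (by simpa using (mem_filter.mp hε).2)
        (hsame (by rw [hκout]) : τ.SameCycle (κ x).out x)
    · intro h _
      funext q
      simp only [hκout]
    · intro ε hε
      refine Finset.prod_congr rfl fun x _ => ?_
      congr 1
      exact inv_constant τ ε (by simpa using (mem_filter.mp hε).2)
        ((hsame (by rw [hκout]) : τ.SameCycle (κ x).out x)).symm
  have step2 : ∀ h : Quotient sc → Bool, ∏ x, l (h (κ x)) = ∏ q, l (h q) ^ m q := by
    intro h
    rw [← Finset.prod_fiberwise univ κ (fun x => l (h (κ x)))]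
    refine Finset.prod_congr rfl fun q _ => ?_
    rw [Finset.prod_congr rfl (fun x hx => by rw [(mem_filter.mp hx).2]), Finset.prod_const]
  have step3 : ∑ h : Quotient sc → Bool, ∏ q, l (h q) ^ m q
      = ∏ q, (l true ^ m q + l false ^ m q) := by
    rw [sum_fun_prod (F := fun q b => l b ^ m q)]
    exact Finset.prod_congr rfl fun q _ => by rw [Fintype.sum_bool]
  have step4 : ∀ q, l true ^ m q + l false ^ m q ≤ ρ ^ nf q := by
    intro q
    by_cases hfix : τ q.out = q.out
    · have hsingle : ∀ x, κ x = q → x = q.out := by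
        intro x hx
        obtain ⟨i, hi⟩ := (hsame (by rw [hx, hκout]) : τ.SameCycle q.out x)
        rw [Equiv.Perm.zpow_apply_eq_self_of_apply_eq_self hfix i] at hi
        exact hi.symm
      have hset : (univ.filter fun x => κ x = q) = {q.out} := by
        ext x
        simp only [mem_filter, mem_univ, true_and, mem_singleton]
        exact ⟨fun hx => hsingle x hx, fun hx => hx ▸ hκout q⟩
      have hm1 : m q = 1 := by simp only [hm, hset, card_singleton]
      have hn0 : nf q = 0 := by
        simp only [hnf, card_eq_zero, Finset.filter_eq_empty_iff]
        intro x _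
        rintro ⟨hx, hτ⟩
        exact hτ (by rw [hsingle x hx]; exact hfix)
      rw [hm1, hn0, pow_one, pow_one, pow_zero, hsum]
    · have hall : ∀ x, κ x = q → τ x ≠ x := by
        intro x hx hfx
        obtain ⟨i, hi⟩ := (hsame (by rw [hx, hκout]) : τ.SameCycle x q.out)
        rw [Equiv.Perm.zpow_apply_eq_self_of_apply_eq_self hfx i] at hi
        exact hfix (hi ▸ hfx)
      have hmn : nf q = m q := by
        simp only [hnf, hm]
        congr 1
        apply Finset.filter_congr
        intro x _
        constructor
        · rintro ⟨hx, _⟩; exact hx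
        · intro hx; exact ⟨hx, hall x hx⟩
      have hm2 : 2 ≤ m q := by
        have h1 : q.out ∈ univ.filter fun x => κ x = q := by
          simp only [mem_filter, mem_univ, true_and]; exact hκout q
        have h2 : τ q.out ∈ univ.filter fun x => κ x = q := by
          simp only [mem_filter, mem_univ, true_and]; rw [hκτ]; exact hκout q
        have := Finset.one_lt_card.mpr ⟨q.out, h1, τ q.out, h2, (Ne.symm hfix)⟩
        exact (by simpa [hm] using this : 1 < m q)
      obtain ⟨k, hk⟩ : ∃ k, m q = k + 2 := ⟨m q - 2, by omega⟩
      rw [hmn, hk]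
      have haux : ∀ j, l j ^ (k + 2) ≤ ρ ^ k * l j ^ 2 := by
        intro j
        rw [pow_add]
        exact mul_le_mul (pow_le_pow_left₀ (hl j) (hlρ j) k) le_rfl (by positivity)
          (by positivity)
      calc l true ^ (k + 2) + l false ^ (k + 2)
          ≤ ρ ^ k * l true ^ 2 + ρ ^ k * l false ^ 2 :=
            add_le_add (haux true) (haux false)
        _ = ρ ^ k * ρ ^ 2 := by rw [hρsq]; ring
        _ = ρ ^ (k + 2) := by rw [pow_add]
  have step5 : ∑ q, nf q = (univ.filter fun x => τ x ≠ x).card := by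
    rw [Finset.card_eq_sum_card_fiberwise (f := κ) (t := univ) (fun x _ => mem_univ _)]
    refine Finset.sum_congr rfl fun q _ => ?_
    simp only [hnf]
    congr 1
    rw [Finset.filter_filter]
    apply Finset.filter_congr
    intro x _
    tauto
  calc ∑ ε : S → Bool, (if ∀ x, ε (τ x) = ε x then ∏ x, l (ε x) else 0)
      = ∏ q, (l true ^ m q + l false ^ m q) := by
        rw [step1, Finset.sum_congr rfl fun h _ => step2 h, step3]
    _ ≤ ∏ q, ρ ^ nf q := by
        refine Finset.prod_le_prod (fun q _ => ?_) (fun q _ => step4 q)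
        have := hl true; have := hl false; positivity
    _ = ρ ^ ∑ q, nf q := Finset.prod_pow_eq_pow_sum univ nf ρ
    _ = ρ ^ (univ.filter fun x => τ x ≠ x).card := by rw [step5]

lemma choose_z (p11 p10 p01 p00 : ℝ) (h11 : 0 ≤ p11) (h10 : 0 ≤ p10) (h01 : 0 ≤ p01)
    (h00 : 0 ≤ p00) (hsum : p11 + p10 + p01 + p00 = 1) (hcorr : p01 * p10 < p11 * p00) :
    ∃ z : ℝ, 0 < z ∧ z ≤ 1 ∧
      0 ≤ (p11 + p10) * (p00 + p01) - (p11 * z + p10 * z⁻¹) * (p00 * z + p01 * z⁻¹) ∧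
      1 - 2 * ((p11 + p10) * (p00 + p01) - (p11 * z + p10 * z⁻¹) * (p00 * z + p01 * z⁻¹))
        ≤ Real.exp (-(2 * (Real.sqrt (p11 * p00) - Real.sqrt (p01 * p10)) ^ 2)) := by
  have hP0 : 0 < p11 * p00 := lt_of_le_of_lt (mul_nonneg h01 h10) hcorr
  have hΔ0 : 0 < Real.sqrt (p11 * p00) := Real.sqrt_pos.mpr hP0
  have hΔ2 : Real.sqrt (p11 * p00) ^ 2 = p11 * p00 := Real.sq_sqrt hP0.le
  set Δ := Real.sqrt (p11 * p00)
  set δ' := Real.sqrt (p01 * p10) with hδdef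
  have hδ2 : δ' ^ 2 = p01 * p10 := Real.sq_sqrt (mul_nonneg h01 h10)
  have hδ0 : 0 ≤ δ' := Real.sqrt_nonneg _
  rcases eq_or_lt_of_le (mul_nonneg h01 h10) with hpq | hpq
  · -- p01 * p10 = 0
    have hδz : δ' = 0 := by rw [hδdef, ← hpq, Real.sqrt_zero]
    have hs1 : p11 + p00 ≤ 1 := by linarith
    have haux1 : (0:ℝ) ≤ 1 - (p11 + p00) := by linarith
    have haux2 : (0:ℝ) ≤ p11 + p00 := by linarith
    have hP4 : p11 * p00 ≤ 1 / 4 := by nlinarith [sq_nonneg (p11 - p00), mul_nonneg haux1 haux2]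
    set z := Real.sqrt (p11 * p00 / 2) with hzdef
    have hz0 : 0 < z := Real.sqrt_pos.mpr (by linarith)
    have hz2 : z ^ 2 = p11 * p00 / 2 := Real.sq_sqrt (by linarith)
    have hzz : z * z⁻¹ = 1 := mul_inv_cancel₀ hz0.ne'
    have hpp : p10 * p01 = 0 := by linear_combination -hpq
    have hDet : (p11 + p10) * (p00 + p01) - (p11 * z + p10 * z⁻¹) * (p00 * z + p01 * z⁻¹)
        = p11 * p00 - (p11 * p00) ^ 2 / 2 := by
      have expand : (p11 * z + p10 * z⁻¹) * (p00 * z + p01 * z⁻¹)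
          = p11 * p00 * z ^ 2 + p11 * p01 * (z * z⁻¹) + p10 * p00 * (z * z⁻¹)
            + p10 * p01 * (z⁻¹) ^ 2 := by ring
      rw [expand, hzz, hpp, hz2]
      ring_nf
      linear_combination hpp
    refine ⟨z, hz0, Real.sqrt_le_one.mpr (by linarith), ?_, ?_⟩
    · rw [hDet]; nlinarith
    · rw [hDet, hδz, sub_zero]
      have hexp1 : 1 - p11 * p00 ≤ Real.exp (-(p11 * p00)) := by
        have := Real.add_one_le_exp (-(p11 * p00)); linarith
      have h1P : 0 ≤ 1 - p11 * p00 := by linarith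
      have hsq : Real.exp (-(2 * Δ ^ 2)) = Real.exp (-(p11 * p00)) * Real.exp (-(p11 * p00)) := by
        rw [← Real.exp_add, hΔ2]; ring_nf
      rw [hsq]
      nlinarith [hexp1, h1P]
  · -- p01 * p10 > 0
    have hδ0' : 0 < δ' := Real.sqrt_pos.mpr hpq
    have hδΔ : δ' < Δ := by
      apply Real.sqrt_lt_sqrt (mul_nonneg h01 h10) hcorr
    set z := Real.sqrt (δ' / Δ) with hzdef
    have hz0 : 0 < z := Real.sqrt_pos.mpr (div_pos hδ0' hΔ0)
    have hz2 : z ^ 2 = δ' / Δ := Real.sq_sqrt (div_nonneg hδ0 hΔ0.le)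
    have hDet : (p11 + p10) * (p00 + p01) - (p11 * z + p10 * z⁻¹) * (p00 * z + p01 * z⁻¹)
        = (Δ - δ') ^ 2 := by
      have hzz : z * z⁻¹ = 1 := mul_inv_cancel₀ hz0.ne'
      have hiz2 : (z⁻¹) ^ 2 = Δ / δ' := by
        rw [inv_pow, hz2, inv_div]
      have e1 : p11 * p00 * z ^ 2 = Δ * δ' := by
        rw [hz2, ← hΔ2]; field_simp
      have e2 : p10 * p01 * (z⁻¹) ^ 2 = Δ * δ' := by
        rw [hiz2, mul_div_assoc', div_eq_iff hδ0'.ne']; linear_combination -Δ * hδ2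
      have expand : (p11 * z + p10 * z⁻¹) * (p00 * z + p01 * z⁻¹)
          = p11 * p00 * z ^ 2 + p11 * p01 * (z * z⁻¹) + p10 * p00 * (z * z⁻¹)
            + p10 * p01 * (z⁻¹) ^ 2 := by ring
      rw [expand, e1, e2, hzz]
      linear_combination -hΔ2 - hδ2
    refine ⟨z, hz0, ?_, ?_, ?_⟩
    · exact Real.sqrt_le_one.mpr (by rw [div_le_one hΔ0]; exact hδΔ.le)
    · rw [hDet]; positivity
    · rw [hDet]
      have := Real.add_one_le_exp (-(2 * (Δ - δ') ^ 2))
      linarith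

lemma pair_count (n : ℕ) (π : Equiv.Perm (Fin n)) :
    (univ.filter fun i : Fin n => π i ≠ i).card * (n - 2)
      ≤ 2 * (univ.filter fun e : VPairs n => pairPerm π e ≠ e).card := by
  classical
  set B := univ.filter fun i : Fin n => π i ≠ i with hB
  set A := univ.filter fun e : VPairs n => pairPerm π e ≠ e with hA
  have key : ∀ i ∈ B, n - 2 ≤ (A.filter fun e => i ∈ e.val).card := by
    intro i hi
    have hπi : π i ≠ i := by simpa [hB] using (mem_filter.mp hi).2
    set C := ((univ : Finset (Fin n)).erase i).erase (π i) with hC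
    have hCcard : C.card = n - 2 := by
      rw [hC, card_erase_of_mem (mem_erase.mpr ⟨hπi, mem_univ _⟩),
        card_erase_of_mem (mem_univ i), card_univ, Fintype.card_fin]
      omega
    let f : Fin n → VPairs n := fun j =>
      if h : j = i then ⟨s(i, π i), fun hd => hπi ((Sym2.mk_isDiag_iff.mp hd).symm)⟩
      else ⟨s(i, j), fun hd => h (Sym2.mk_isDiag_iff.mp hd).symm⟩
    rw [← hCcard]
    apply Finset.card_le_card_of_injOn f
    · intro j hj
      have hji : j ≠ i := (mem_erase.mp (mem_erase.mp hj).2).1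
      have hjπ : j ≠ π i := (mem_erase.mp hj).1
      have hfj : f j = ⟨s(i, j), fun hd => hji (Sym2.mk_isDiag_iff.mp hd).symm⟩ := dif_neg hji
      rw [hfj]
      simp only [Finset.mem_coe, mem_filter, hA, mem_univ, true_and]
      constructor
      · intro hEq
        have hval : Sym2.map π s(i, j) = s(i, j) := congrArg Subtype.val hEq
        rw [Sym2.map_pair_eq, Sym2.eq_iff] at hval
        rcases hval with ⟨h1, _⟩ | ⟨h1, h2⟩
        · exact hπi h1
        · exact hjπ h1.symm
      · exact Sym2.mem_iff.mpr (Or.inl rfl)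
    · intro j hj j' hj' hEq
      have hji : j ≠ i := (mem_erase.mp (mem_erase.mp hj).2).1
      have hji' : j' ≠ i := (mem_erase.mp (mem_erase.mp hj').2).1
      rw [show f j = ⟨s(i, j), fun hd => hji (Sym2.mk_isDiag_iff.mp hd).symm⟩ from dif_neg hji,
        show f j' = ⟨s(i, j'), fun hd => hji' (Sym2.mk_isDiag_iff.mp hd).symm⟩ from dif_neg hji']
        at hEq
      have := Sym2.eq_iff.mp (congrArg Subtype.val hEq)
      rcases this with ⟨_, h2⟩ | ⟨h1, h2⟩
      · exact h2
      · exact absurd h2 hji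
  have hsum1 : B.card * (n - 2) ≤ ∑ i ∈ B, (A.filter fun e => i ∈ e.val).card := by
    calc B.card * (n - 2) = ∑ _i ∈ B, (n - 2) := by rw [Finset.sum_const, smul_eq_mul]
      _ ≤ _ := Finset.sum_le_sum key
  have hswap : ∑ i ∈ B, (A.filter fun e => i ∈ e.val).card
      = ∑ e ∈ A, (B.filter fun i => i ∈ e.val).card := by
    simp only [Finset.card_filter]
    exact Finset.sum_comm
  have hA2 : ∀ e ∈ A, (B.filter fun i => i ∈ e.val).card ≤ 2 := by
    intro e _
    obtain ⟨x, y, hxy⟩ : ∃ x y, e.val = s(x, y) :=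
      Sym2.inductionOn e.val fun x y => ⟨x, y, rfl⟩
    have hsub : (B.filter fun i => i ∈ e.val) ⊆ {x, y} := by
      intro i hi
      have : i ∈ e.val := (mem_filter.mp hi).2
      rw [hxy] at this
      have := Sym2.mem_iff.mp this
      simp only [mem_insert, mem_singleton]
      exact this
    calc (B.filter fun i => i ∈ e.val).card ≤ ({x, y} : Finset (Fin n)).card :=
          Finset.card_le_card hsub
      _ ≤ 2 := (Finset.card_insert_le _ _).trans (by simp)
  calc B.card * (n - 2) ≤ ∑ e ∈ A, (B.filter fun i => i ∈ e.val).card := hsum1.trans (le_of_eq hswap)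
    _ ≤ ∑ _e ∈ A, 2 := Finset.sum_le_sum hA2
    _ = 2 * A.card := by rw [Finset.sum_const, smul_eq_mul, mul_comm]

end AuxLemmas

set_option maxHeartbeats 2000000 in
/-- the upper bound on `P[δ(l(π)) ≤ 0]` (Lemma 9). -/
theorem delta_le_zero_prob_bound
    (n : ℕ) (p11 p10 p01 p00 : ℝ)
    (hpos : 0 ≤ p11 ∧ 0 ≤ p10 ∧ 0 ≤ p01 ∧ 0 ≤ p00)
    (hsum : p11 + p10 + p01 + p00 = 1)
    (hcorr : p01 * p10 < p11 * p00)
    (nt : ℕ) (π : Equiv.Perm (Fin n)) (hπ : π ∈ Snn n nt) :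
    ERprob n (pv p11 p10 p01 p00)
        (fun gab => deltaQ (pairPerm π) gab.1 gab.2 ≤ 0)
      ≤ Real.exp (-(1 / 2) * nt * ((n : ℝ) - 2) *
          (Real.sqrt (p11 * p00) - Real.sqrt (p01 * p10)) ^ 2) := by
  classical
  obtain ⟨h11, h10, h01, h00⟩ := hpos
  obtain ⟨z, hz0, hz1, hdet, hexp⟩ := choose_z p11 p10 p01 p00 h11 h10 h01 h00 hsum hcorr
  have hP0 : 0 < p11 * p00 := lt_of_le_of_lt (mul_nonneg h01 h10) hcorr
  have hp11 : 0 < p11 := by nlinarith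
  have hp00 : 0 < p00 := by nlinarith
  set D : ℝ := Real.sqrt (p11 * p00) - Real.sqrt (p01 * p10) with hD
  set τ : Equiv.Perm (VPairs n) := pairPerm π with hτ
  set P : Bool → Bool → ℝ := pv p11 p10 p01 p00 with hP
  have hPnn : ∀ a b, 0 ≤ P a b := by
    intro a b; cases a <;> cases b <;> simp [hP, pv] <;> assumption
  set M : Bool → Bool → ℝ := fun a b =>
    ∑ c, P a c * z ^ (if b = c then 0 else 1) * (z ^ (if a = c then 0 else 1))⁻¹ with hM
  have hzi : z * z⁻¹ = 1 := mul_inv_cancel₀ hz0.ne'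
  have hβpos : 0 < p11 * z + p10 * z⁻¹ := by
    have h1 : 0 < p11 * z := mul_pos hp11 hz0
    have h2 : 0 ≤ p10 * z⁻¹ := mul_nonneg h10 (by positivity)
    linarith
  have hγpos : 0 < p00 * z + p01 * z⁻¹ := by
    have h1 : 0 < p00 * z := mul_pos hp00 hz0
    have h2 : 0 ≤ p01 * z⁻¹ := mul_nonneg h01 (by positivity)
    linarith
  have hMval : ∀ a b : Bool, M a b =
      (if a then (if b then p11 + p10 else p11 * z + p10 * z⁻¹)
       else (if b then p00 * z + p01 * z⁻¹ else p00 + p01)) := by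
    intro a b
    rw [hM]
    simp only
    rw [Fintype.sum_bool]
    cases a <;> cases b <;>
      simp only [hP, pv, Bool.false_eq_true, Bool.true_eq_false, if_true, if_false, reduceIte,
        pow_zero, pow_one, inv_one, mul_one, one_mul] <;>
      field_simp <;> ring
  obtain ⟨l, u, w, horth, hdecomp, hl0, hlsum, hlsq⟩ :=
    eigen_exists (p11 + p10) (p11 * z + p10 * z⁻¹) (p00 * z + p01 * z⁻¹) (p00 + p01)
      (mul_pos hβpos hγpos) (by linarith) hdet
  have hMdecomp : ∀ a b, M a b = ∑ j, l j * u j a * w j b := by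
    intro a b; rw [hMval a b, hdecomp a b]
  set ρ : ℝ := Real.sqrt (l true ^ 2 + l false ^ 2) with hρ
  have hρ0 : 0 ≤ ρ := Real.sqrt_nonneg _
  set N : ℕ := (univ.filter fun e : VPairs n => τ e ≠ e).card with hN
  -- Step 1: indicator bound and per-edge factorization
  have step1 : ERprob n P (fun gab => deltaQ τ gab.1 gab.2 ≤ 0)
      ≤ ∑ f : VGraph n, ∑ g : VGraph n, ∏ e : VPairs n,
          (P (f e) (g e) * z ^ (if f (τ e) = g e then 0 else 1)
            * (z ^ (if f e = g e then 0 else 1))⁻¹) := by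
    rw [ERprob, Fintype.sum_prod_type]
    apply Finset.sum_le_sum
    intro f _
    apply Finset.sum_le_sum
    intro g _
    have hWnn : (0:ℝ) ≤ ∏ e : VPairs n, P (f e) (g e) :=
      Finset.prod_nonneg fun e _ => hPnn _ _
    have hsplit : ∏ e : VPairs n,
        (P (f e) (g e) * z ^ (if f (τ e) = g e then 0 else 1)
          * (z ^ (if f e = g e then 0 else 1))⁻¹)
        = (z ^ hamming (f ∘ τ) g * (z ^ hamming f g)⁻¹) * ∏ e : VPairs n, P (f e) (g e) := by
      rw [Finset.prod_mul_distrib, Finset.prod_mul_distrib, Finset.prod_inv_distrib,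
        Finset.prod_pow_eq_pow_sum, Finset.prod_pow_eq_pow_sum]
      have e1 : ∑ e : VPairs n, (if f (τ e) = g e then 0 else 1) = hamming (f ∘ τ) g := by
        rw [hamming, Finset.card_filter]
        refine Finset.sum_congr rfl fun e _ => ?_
        by_cases hc : f (τ e) = g e <;> simp [hc, Function.comp]
      have e2 : ∑ e : VPairs n, (if f e = g e then 0 else 1) = hamming f g := by
        rw [hamming, Finset.card_filter]
        refine Finset.sum_congr rfl fun e _ => ?_
        by_cases hc : f e = g e <;> simp [hc]
      rw [e1, e2]
      ring
    rw [hsplit]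
    refine mul_le_mul_of_nonneg_right ?_ hWnn
    split_ifs with h
    · have hle : hamming (f ∘ τ) g ≤ hamming f g := by
        have h2 : ((hamming (f ∘ τ) g : ℚ)) ≤ ((hamming f g : ℚ)) := by
          rw [deltaQ] at h; linarith
        exact_mod_cast h2
      rw [← div_eq_mul_inv, le_div_iff₀ (by positivity), one_mul]
      exact pow_le_pow_of_le_one hz0.le hz1 hle
    · positivity
  -- Step 2: sum over g
  have step2 : ∑ f : VGraph n, ∑ g : VGraph n, ∏ e : VPairs n,
        (P (f e) (g e) * z ^ (if f (τ e) = g e then 0 else 1)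
          * (z ^ (if f e = g e then 0 else 1))⁻¹)
      = ∑ f : VGraph n, ∏ e : VPairs n, M (f e) (f (τ e)) := by
    refine Finset.sum_congr rfl fun f _ => ?_
    rw [sum_fun_prod (F := fun e b => P (f e) b * z ^ (if f (τ e) = b then 0 else 1)
      * (z ^ (if f e = b then 0 else 1))⁻¹)]
  -- Step 3 + 4
  have step34 : ∑ f : VGraph n, ∏ e : VPairs n, M (f e) (f (τ e)) ≤ ρ ^ N := by
    rw [key_sum_eq τ l u w horth M hMdecomp]
    exact invariant_sum_bound τ l hl0 hlsum
  -- Step 5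
  have step5 : ρ ≤ Real.exp (-(D ^ 2)) := by
    have hsq : Real.exp (-(2 * D ^ 2)) = Real.exp (-(D ^ 2)) ^ 2 := by
      rw [show Real.exp (-(D ^ 2)) ^ 2 = Real.exp (-(D ^ 2)) * Real.exp (-(D ^ 2)) from sq _,
        ← Real.exp_add]; congr 1; ring
    rw [hρ, hlsq]
    calc Real.sqrt (1 - 2 * ((p11 + p10) * (p00 + p01)
          - (p11 * z + p10 * z⁻¹) * (p00 * z + p01 * z⁻¹)))
        ≤ Real.sqrt (Real.exp (-(2 * D ^ 2))) := Real.sqrt_le_sqrt hexp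
      _ = Real.exp (-(D ^ 2)) := by rw [hsq, Real.sqrt_sq (Real.exp_nonneg _)]
  -- counting
  have hnt : (univ.filter fun x : Fin n => π x ≠ x).card = nt := by
    have := hπ; rw [Snn, Finset.mem_filter] at this; exact this.2
  have hND : (nt : ℝ) * ((n : ℝ) - 2) ≤ 2 * (N : ℝ) := by
    rcases le_or_gt 2 n with h2 | h2
    · have hcount := pair_count n π
      rw [hnt] at hcount
      have hcast : ((nt * (n - 2) : ℕ) : ℝ) ≤ ((2 * N : ℕ) : ℝ) := by
        exact_mod_cast hcount
      push_cast [Nat.cast_sub h2] at hcast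
      convert hcast using 2
    · have hnt0 : nt = 0 := by
        haveI : Subsingleton (Fin n) :=
          ⟨fun a b => by have ha := a.isLt; have hb := b.isLt; exact Fin.ext (by omega)⟩
        rw [← hnt]
        rw [Finset.card_eq_zero, Finset.filter_eq_empty_iff]
        intro x _
        simp [Subsingleton.elim (π x) x]
      rw [hnt0]
      simp only [Nat.cast_zero, zero_mul]
      positivity
  -- final chain
  calc ERprob n P (fun gab => deltaQ τ gab.1 gab.2 ≤ 0)
      ≤ ρ ^ N := step1.trans (le_of_eq step2) |>.trans step34
    _ ≤ Real.exp (-(D ^ 2)) ^ N := pow_le_pow_left₀ hρ0 step5 N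
    _ = Real.exp ((N : ℝ) * -(D ^ 2)) := (Real.exp_nat_mul _ N).symm
    _ ≤ Real.exp (-(1 / 2) * nt * ((n : ℝ) - 2) * D ^ 2) := by
        apply Real.exp_le_exp.mpr
        nlinarith [hND, sq_nonneg D]
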